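/- arXiv:2510.22501 — 2 statements merged into one kernel-verified Lean document; each statement's English description precedes it below -/
import Mathlib

section
/- Fix q ∈ (0,1]ⁿ satisfying δ_i ≤ δ'_i + (1 − 1/q_i)·ω_i for every i, fix nonnegative initial vectors x(0), y(0) ∈ ℝⁿ, and let Q ⊆ {1,…,n}×{1,…,n} be a candidate edge set such that ρ(M_{−P}(q)) < 1 for every P ⊆ Q. Then the set function P ↦ σ^U(P) = 1ᵀ·(A + Q(I − A))^{−1}·(D·(I − M_{−P}(q))^{−1} − I)·(x(0) + Q·y(0)) is supermodular on subsets of Q: for all P ⊆ P' ⊆ Q and every edge e ∈ Q \ P', one has σ^U(P ∪ {e}) − σ^U(P) ≤ σ^U(P' ∪ {e}) − σ^U(P'). (Second part of Lemma 1.) -/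
open Matrix Filter Finset

/-- Spectral radius of a real square matrix: the maximum modulus of its complex
eigenvalues (elements of the spectrum of the matrix viewed over `ℂ`). -/
noncomputable def specRad {n : ℕ} (M : Matrix (Fin n) (Fin n) ℝ) : ℝ :=
  sSup {r : ℝ | ∃ μ : ℂ, μ ∈ spectrum ℂ (M.map (Complex.ofReal)) ∧ r = ‖μ‖}

/-- The matrix `B` with the entries indexed by the edge set `P` deleted (set to `0`). -/
def Bdel {n : ℕ} (B : Matrix (Fin n) (Fin n) ℝ) (P : Finset (Fin n × Fin n)) :
    Matrix (Fin n) (Fin n) ℝ :=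
  Matrix.of fun i j => if (i, j) ∈ P then 0 else B i j

/-- The upper-bound set function
`σᵁ(P) = 1ᵀ·(A + Q(I − A))⁻¹·(D·(I − M₋ₚ(q))⁻¹ − I)·(x0 + Q·y0)`. -/
noncomputable def sigmaU {n : ℕ} (α ω δ δ' s q x0 y0 : Fin n → ℝ)
    (B : Matrix (Fin n) (Fin n) ℝ) (P : Finset (Fin n × Fin n)) : ℝ :=
  (fun _ => (1 : ℝ)) ⬝ᵥ
    ((Matrix.diagonal α + Matrix.diagonal q * (1 - Matrix.diagonal α))⁻¹ *
      (Matrix.diagonal δ *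
        (1 - (1 - Matrix.diagonal (fun i => min (δ i) (δ' i + (1 - 1 / q i) * ω i)) +
          (Matrix.diagonal α + Matrix.diagonal q * (1 - Matrix.diagonal α)) *
            Matrix.diagonal s * Bdel B P))⁻¹ - 1)) *ᵥ
      (x0 + Matrix.diagonal q *ᵥ y0)

section auxAnalytic

attribute [local instance] Matrix.linftyOpNormedAddCommGroup Matrix.linftyOpNormedRing
  Matrix.linftyOpNormedAlgebra

lemma entry_nnorm_le {n : ℕ} (A : Matrix (Fin n) (Fin n) ℂ) (i j : Fin n) :
    ‖A i j‖ ≤ ‖A‖ := by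
  have h1 : ‖A i j‖₊ ≤ ∑ j' : Fin n, ‖A i j'‖₊ :=
    Finset.single_le_sum (f := fun j' => ‖A i j'‖₊) (fun _ _ => zero_le) (Finset.mem_univ j)
  have h2 : (∑ j' : Fin n, ‖A i j'‖₊) ≤ Finset.univ.sup fun i : Fin n => ∑ j' : Fin n, ‖A i j'‖₊ :=
    Finset.le_sup (f := fun i => ∑ j' : Fin n, ‖A i j'‖₊) (Finset.mem_univ i)
  have := h1.trans h2
  rw [Matrix.linfty_opNorm_def]
  exact_mod_cast this

lemma exists_pow_entry_bound {n : ℕ} (hn : 1 ≤ n) (M : Matrix (Fin n) (Fin n) ℝ)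
    (h : specRad M < 1) :
    ∃ r : ℝ, 0 ≤ r ∧ r < 1 ∧ ∀ᶠ k in atTop, ∀ i j, |(M ^ k) i j| ≤ r ^ k := by
  haveI : Nonempty (Fin n) := ⟨⟨0, hn⟩⟩
  set Mc : Matrix (Fin n) (Fin n) ℂ := M.map Complex.ofReal with hMc
  have hmap : ∀ k : ℕ, Mc ^ k = (M ^ k).map Complex.ofReal := by
    intro k
    have : Mc = (Complex.ofRealHom.mapMatrix : Matrix (Fin n) (Fin n) ℝ →+* _) M := rfl
    rw [this, ← map_pow]
    rfl
  have hb : ∀ z ∈ spectrum ℂ Mc, ‖z‖ ≤ specRad M := by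
    intro z hz
    apply le_csSup
    · refine ⟨‖Mc‖, ?_⟩
      rintro r ⟨μ, hμ, rfl⟩
      simpa using spectrum.norm_le_norm_of_mem hμ
    · exact ⟨z, hz, rfl⟩
  have hρ : spectralRadius ℂ Mc < 1 := by
    obtain ⟨z, hz, hz2⟩ := spectrum.exists_nnnorm_eq_spectralRadius (a := Mc)
    rw [← hz2]
    have : ‖z‖ < 1 := lt_of_le_of_lt (hb z hz) h
    rw [show (1 : ENNReal) = ((1 : NNReal) : ENNReal) by simp, ENNReal.coe_lt_coe,
      ← NNReal.coe_lt_coe]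
    simpa using this
  obtain ⟨r, hr1, hr2⟩ := ENNReal.lt_iff_exists_nnreal_btwn.mp hρ
  have hrlt1 : r < 1 := by exact_mod_cast hr2
  have htd := spectrum.pow_nnnorm_pow_one_div_tendsto_nhds_spectralRadius Mc
  have hev : ∀ᶠ k : ℕ in atTop, ((‖Mc ^ k‖₊ : ENNReal) ^ (1 / (k : ℝ))) < (r : ENNReal) :=
    htd.eventually_lt_const hr1
  refine ⟨r, r.coe_nonneg, hrlt1, ?_⟩
  filter_upwards [hev, eventually_ge_atTop 1] with k hk hk1 i j
  have hk0 : (0 : ℝ) < (k : ℝ) := by exact_mod_cast hk1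
  have h2 : (‖Mc ^ k‖₊ : ENNReal) < ((r ^ (k : ℝ) : NNReal) : ENNReal) := by
    have hlt := ENNReal.rpow_lt_rpow hk hk0
    rw [← ENNReal.rpow_mul, one_div_mul_cancel (ne_of_gt hk0), ENNReal.rpow_one] at hlt
    rwa [ENNReal.coe_rpow_of_nonneg r (le_of_lt hk0)]
  rw [ENNReal.coe_lt_coe, ← NNReal.coe_lt_coe, NNReal.coe_rpow, coe_nnnorm,
    Real.rpow_natCast] at h2
  have h3 : |(M ^ k) i j| ≤ ‖Mc ^ k‖ := by
    have heq : (Mc ^ k) i j = Complex.ofReal ((M ^ k) i j) := by rw [hmap]; rfl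
    have h4 := entry_nnorm_le (Mc ^ k) i j
    rwa [heq, Complex.norm_real, Real.norm_eq_abs] at h4
  exact h3.trans (le_of_lt h2)

end auxAnalytic

/-- Neumann series for a real matrix with spectral radius `< 1`, entrywise. -/
lemma neumann_series {n : ℕ} (hn : 1 ≤ n) (M : Matrix (Fin n) (Fin n) ℝ)
    (h : specRad M < 1) :
    (∀ i j, Summable fun k : ℕ => (M ^ k) i j) ∧
      ∀ i j, (1 - M)⁻¹ i j = ∑' k : ℕ, (M ^ k) i j := by
  have hsum : ∀ i j, Summable fun k : ℕ => (M ^ k) i j := by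
    obtain ⟨r, hr0, hr1, hev⟩ := exists_pow_entry_bound hn M h
    intro i j
    refine Summable.of_norm_bounded_eventually_nat
      (summable_geometric_of_lt_one hr0 hr1) ?_
    filter_upwards [hev] with k hk
    simpa [Real.norm_eq_abs] using hk i j
  have key : (1 - M) * (Matrix.of fun i j => ∑' k : ℕ, (M ^ k) i j) = 1 := by
    ext i j
    rw [Matrix.mul_apply]
    calc ∑ l, (1 - M) i l * (Matrix.of fun i j => ∑' k : ℕ, (M ^ k) i j) l j
        = ∑ l, ∑' k : ℕ, (1 - M) i l * (M ^ k) l j := by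
          refine Finset.sum_congr rfl fun l _ => ?_
          exact (Summable.tsum_mul_left _ (hsum l j)).symm
      _ = ∑' k : ℕ, ∑ l, (1 - M) i l * (M ^ k) l j :=
          (Summable.tsum_finsetSum fun l _ => (hsum l j).mul_left _).symm
      _ = ∑' k : ℕ, ((M ^ k) i j - (M ^ (k + 1)) i j) := by
          refine tsum_congr fun k => ?_
          rw [← Matrix.mul_apply, sub_mul, one_mul, ← pow_succ']
          rw [Matrix.sub_apply]
      _ = (∑' k : ℕ, (M ^ k) i j) - ∑' k : ℕ, (M ^ (k + 1)) i j :=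
          ((hsum i j).hasSum.sub ((summable_nat_add_iff 1).mpr (hsum i j)).hasSum).tsum_eq
      _ = (M ^ 0) i j := by rw [Summable.tsum_eq_zero_add (hsum i j)]; ring
      _ = (1 : Matrix (Fin n) (Fin n) ℝ) i j := by rw [pow_zero]
  refine ⟨hsum, fun i j => ?_⟩
  rw [Matrix.inv_eq_right_inv key]
  rfl

lemma pow_entry_nonneg {n : ℕ} {A : Matrix (Fin n) (Fin n) ℝ}
    (hA : ∀ i j, 0 ≤ A i j) (k : ℕ) : ∀ i j, 0 ≤ (A ^ k) i j := by
  induction k with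
  | zero =>
    intro i j
    rw [pow_zero, Matrix.one_apply]
    split <;> norm_num
  | succ k ih =>
    intro i j
    rw [pow_succ, Matrix.mul_apply]
    exact Finset.sum_nonneg fun l _ => mul_nonneg (ih i l) (hA l j)

lemma pow_entry_mono {n : ℕ} {A B : Matrix (Fin n) (Fin n) ℝ}
    (hA : ∀ i j, 0 ≤ A i j) (hAB : ∀ i j, A i j ≤ B i j) (k : ℕ) :
    ∀ i j, (A ^ k) i j ≤ (B ^ k) i j := by
  induction k with
  | zero => intro i j; rw [pow_zero, pow_zero]
  | succ k ih =>
    intro i j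
    rw [pow_succ, pow_succ, Matrix.mul_apply, Matrix.mul_apply]
    refine Finset.sum_le_sum fun l _ => ?_
    exact mul_le_mul (ih i l) (hAB l j) (hA l j) (pow_entry_nonneg
      (fun i j => (hA i j).trans (hAB i j)) k i l)

lemma pow_sub_mono {n : ℕ} {N N' K K' : Matrix (Fin n) (Fin n) ℝ}
    (hK'0 : ∀ i j, 0 ≤ K' i j) (hK'K : ∀ i j, K' i j ≤ K i j)
    (hKN : ∀ i j, K i j ≤ N i j) (hK'N' : ∀ i j, K' i j ≤ N' i j)
    (hN'N : ∀ i j, N' i j ≤ N i j)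
    (hE : ∀ i j, N i j - K i j = N' i j - K' i j) (k : ℕ) :
    ∀ i j, (N' ^ k) i j - (K' ^ k) i j ≤ (N ^ k) i j - (K ^ k) i j := by
  have hK0 : ∀ i j, 0 ≤ K i j := fun i j => (hK'0 i j).trans (hK'K i j)
  have hN'0 : ∀ i j, 0 ≤ N' i j := fun i j => (hK'0 i j).trans (hK'N' i j)
  have hN0 : ∀ i j, 0 ≤ N i j := fun i j => (hN'0 i j).trans (hN'N i j)
  induction k with
  | zero => intro i j; simp
  | succ k ih =>
    intro i j
    have expand : ∀ (X Y : Matrix (Fin n) (Fin n) ℝ),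
        (X ^ (k + 1)) i j - (Y ^ (k + 1)) i j =
          ∑ l, (X i l * ((X ^ k) l j - (Y ^ k) l j) + (X i l - Y i l) * (Y ^ k) l j) := by
      intro X Y
      rw [pow_succ', pow_succ', Matrix.mul_apply, Matrix.mul_apply, ← Finset.sum_sub_distrib]
      exact Finset.sum_congr rfl fun l _ => by ring
    rw [expand N K, expand N' K']
    refine Finset.sum_le_sum fun l _ => ?_
    have h1 : N' i l * ((N' ^ k) l j - (K' ^ k) l j) ≤ N i l * ((N ^ k) l j - (K ^ k) l j) :=
      mul_le_mul (hN'N i l) (ih l j)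
        (sub_nonneg.mpr (pow_entry_mono hK'0 hK'N' k l j)) (hN0 i l)
    have h2 : (N' i l - K' i l) * ((K' ^ k) l j) ≤ (N i l - K i l) * ((K ^ k) l j) := by
      rw [hE i l]
      exact mul_le_mul_of_nonneg_left (pow_entry_mono hK'0 hK'K k l j)
        (by rw [← hE i l]; exact sub_nonneg.mpr (hKN i l))
    exact add_le_add h1 h2

/-- Lemma 1 (second part): `σᵁ` is supermodular on subsets of the candidate set. -/
theorem sigmaU_supermodular
    (n : ℕ) (hn : 1 ≤ n) (α ω δ δ' s : Fin n → ℝ)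
    (hα : ∀ i, 0 ≤ α i ∧ α i ≤ 1) (hω : ∀ i, 0 ≤ ω i ∧ ω i ≤ 1)
    (hδ : ∀ i, 0 ≤ δ i ∧ δ i ≤ 1) (hδ' : ∀ i, 0 ≤ δ' i ∧ δ' i ≤ 1)
    (hs : ∀ i, 0 ≤ s i ∧ s i ≤ 1) (hωδ' : ∀ i, ω i + δ' i ≤ 1)
    (B : Matrix (Fin n) (Fin n) ℝ) (hB : ∀ i j, 0 ≤ B i j)
    (q : Fin n → ℝ) (hq : ∀ i, 0 < q i ∧ q i ≤ 1)
    (hqδ : ∀ i, δ i ≤ δ' i + (1 - 1 / q i) * ω i)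
    (x0 y0 : Fin n → ℝ) (hx0 : ∀ i, 0 ≤ x0 i) (hy0 : ∀ i, 0 ≤ y0 i)
    (Qc : Finset (Fin n × Fin n))
    (hρ : ∀ P ⊆ Qc, specRad
      (1 - Matrix.diagonal (fun i => min (δ i) (δ' i + (1 - 1 / q i) * ω i)) +
        (Matrix.diagonal α + Matrix.diagonal q * (1 - Matrix.diagonal α)) *
          Matrix.diagonal s * Bdel B P) < 1) :
    ∀ P P' : Finset (Fin n × Fin n), ∀ e : Fin n × Fin n,
      P ⊆ P' → P' ⊆ Qc → e ∈ Qc → e ∉ P' →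
      sigmaU α ω δ δ' s q x0 y0 B (insert e P) - sigmaU α ω δ δ' s q x0 y0 B P ≤
        sigmaU α ω δ δ' s q x0 y0 B (insert e P') - sigmaU α ω δ δ' s q x0 y0 B P' := by
  intro P P' e hPP' hP'Q heQ heP'
  have heP : e ∉ P := fun h => heP' (hPP' h)
  set c : Fin n → ℝ := fun i => min (δ i) (δ' i + (1 - 1 / q i) * ω i) with hc
  set g : Fin n → ℝ := fun i => α i + q i * (1 - α i) with hg
  set NM : Finset (Fin n × Fin n) → Matrix (Fin n) (Fin n) ℝ := fun P0 =>
    1 - Matrix.diagonal c +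
      (Matrix.diagonal α + Matrix.diagonal q * (1 - Matrix.diagonal α)) *
        Matrix.diagonal s * Bdel B P0 with hNM
  have hg0 : ∀ i, 0 < g i := by
    intro i
    have h1 := (hα i).1; have h2 := (hα i).2; have h3 := (hq i).1; have h4 := (hq i).2
    simp only [hg]
    nlinarith
  have hGdiag : Matrix.diagonal α + Matrix.diagonal q * (1 - Matrix.diagonal α)
      = Matrix.diagonal g := by
    rw [← Matrix.diagonal_one, Matrix.diagonal_sub, Matrix.diagonal_mul_diagonal,
      Matrix.diagonal_add]
  have hNMeq : ∀ P0 i j, NM P0 i j =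
      (if i = j then 1 - c i else 0) + g i * s i * Bdel B P0 i j := by
    intro P0 i j
    simp only [hNM, hGdiag, Matrix.diagonal_mul_diagonal]
    rw [Matrix.add_apply, Matrix.sub_apply, Matrix.diagonal_mul, Matrix.one_apply,
      Matrix.diagonal_apply]
    split <;> simp
  have hBdel0 : ∀ P0 i j, 0 ≤ Bdel B P0 i j := by
    intro P0 i j
    simp only [Bdel, Matrix.of_apply]
    split
    · exact le_refl 0
    · exact hB i j
  have hNM0 : ∀ P0 i j, 0 ≤ NM P0 i j := by
    intro P0 i j
    rw [hNMeq]
    have hc1 : c i ≤ 1 := le_trans (min_le_left _ _) (hδ i).2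
    have := mul_nonneg (mul_nonneg (hg0 i).le (hs i).1) (hBdel0 P0 i j)
    split <;> linarith
  have hBdelMono : ∀ P1 P2 : Finset (Fin n × Fin n), P1 ⊆ P2 →
      ∀ i j, Bdel B P2 i j ≤ Bdel B P1 i j := by
    intro P1 P2 h12 i j
    simp only [Bdel, Matrix.of_apply]
    by_cases h1 : (i, j) ∈ P1
    · simp [h1, h12 h1]
    · simp only [h1, if_false]
      split
      · exact hB i j
      · exact le_refl _
  have hNMmono : ∀ P1 P2 : Finset (Fin n × Fin n), P1 ⊆ P2 →
      ∀ i j, NM P2 i j ≤ NM P1 i j := by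
    intro P1 P2 h12 i j
    rw [hNMeq, hNMeq]
    exact add_le_add_right (mul_le_mul_of_nonneg_left (hBdelMono P1 P2 h12 i j)
      (mul_nonneg (hg0 i).le (hs i).1)) _
  have hdiff : ∀ (P0 : Finset (Fin n × Fin n)), e ∉ P0 → ∀ i j,
      NM P0 i j - NM (insert e P0) i j =
        g i * s i * (if (i, j) = e then B e.1 e.2 else 0) := by
    intro P0 he0 i j
    rw [hNMeq, hNMeq]
    have hkey : Bdel B P0 i j - Bdel B (insert e P0) i j =
        (if (i, j) = e then B e.1 e.2 else 0) := by
      simp only [Bdel, Matrix.of_apply, Finset.mem_insert]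
      by_cases h1 : (i, j) = e
      · subst h1
        simp [he0]
      · simp [h1]
    rw [← hkey]
    ring
  -- scalar formula for sigmaU
  set v : Fin n → ℝ := fun j => x0 j + q j * y0 j with hv
  have hv0 : ∀ j, 0 ≤ v j :=
    fun j => add_nonneg (hx0 j) (mul_nonneg (hq j).1.le (hy0 j))
  have hGinv : (Matrix.diagonal g)⁻¹ = Matrix.diagonal (fun i => (g i)⁻¹) := by
    apply Matrix.inv_eq_right_inv
    rw [Matrix.diagonal_mul_diagonal]
    rw [show (fun i => g i * (g i)⁻¹) = fun _ : Fin n => (1 : ℝ) from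
      funext fun i => mul_inv_cancel₀ (ne_of_gt (hg0 i))]
    exact Matrix.diagonal_one
  have hGinv' : (Matrix.diagonal α + Matrix.diagonal q * (1 - Matrix.diagonal α))⁻¹
      = Matrix.diagonal (fun i => (g i)⁻¹) := by rw [hGdiag, hGinv]
  have hsigma : ∀ P0 : Finset (Fin n × Fin n), sigmaU α ω δ δ' s q x0 y0 B P0 =
      (∑ i, ∑ j, (g i)⁻¹ * δ i * ((1 - NM P0)⁻¹ i j) * v j) - ∑ i, (g i)⁻¹ * v i := by
    intro P0
    rw [sigmaU, hGinv']
    have hvv : (x0 + Matrix.diagonal q *ᵥ y0) = v := by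
      funext j
      simp [hv, Matrix.mulVec_diagonal]
    rw [hvv]
    simp only [dotProduct, Matrix.mulVec, one_mul]
    calc ∑ i, ∑ j, (Matrix.diagonal (fun i => (g i)⁻¹) *
          (Matrix.diagonal δ * (1 - NM P0)⁻¹ - 1)) i j * v j
        = ∑ i, ∑ j, ((g i)⁻¹ * δ i * ((1 - NM P0)⁻¹ i j) * v j -
            (1 : Matrix (Fin n) (Fin n) ℝ) i j * ((g i)⁻¹ * v j)) := by
          refine Finset.sum_congr rfl fun i _ => Finset.sum_congr rfl fun j _ => ?_
          rw [Matrix.diagonal_mul, Matrix.sub_apply, Matrix.diagonal_mul]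
          ring
      _ = ∑ i, ((∑ j, (g i)⁻¹ * δ i * ((1 - NM P0)⁻¹ i j) * v j) - (g i)⁻¹ * v i) := by
          refine Finset.sum_congr rfl fun i _ => ?_
          rw [Finset.sum_sub_distrib]
          congr 1
          simp [Matrix.one_apply]
      _ = (∑ i, ∑ j, (g i)⁻¹ * δ i * ((1 - NM P0)⁻¹ i j) * v j) - ∑ i, (g i)⁻¹ * v i :=
          Finset.sum_sub_distrib _ _
  -- Neumann series for the four relevant matrices
  have hneu : ∀ P0 : Finset (Fin n × Fin n), P0 ⊆ Qc →
      (∀ i j, Summable fun k : ℕ => ((NM P0) ^ k) i j) ∧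
        ∀ i j, (1 - NM P0)⁻¹ i j = ∑' k : ℕ, ((NM P0) ^ k) i j :=
    fun P0 h => neumann_series hn (NM P0) (hρ P0 h)
  have hPQ : P ⊆ Qc := hPP'.trans hP'Q
  have hePQ : insert e P ⊆ Qc := Finset.insert_subset heQ hPQ
  have heP'Q : insert e P' ⊆ Qc := Finset.insert_subset heQ hP'Q
  obtain ⟨hsN, hiN⟩ := hneu P hPQ
  obtain ⟨hsK, hiK⟩ := hneu (insert e P) hePQ
  obtain ⟨hsN', hiN'⟩ := hneu P' hP'Q
  obtain ⟨hsK', hiK'⟩ := hneu (insert e P') heP'Q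
  have hterm : ∀ (k : ℕ) i j,
      ((NM (insert e P)) ^ k) i j - ((NM P) ^ k) i j ≤
        ((NM (insert e P')) ^ k) i j - ((NM P') ^ k) i j := by
    intro k i j
    have := pow_sub_mono (N := NM P) (N' := NM P') (K := NM (insert e P))
      (K' := NM (insert e P'))
      (hNM0 (insert e P'))
      (hNMmono _ _ (Finset.insert_subset_insert e hPP'))
      (hNMmono _ _ (Finset.subset_insert e P))
      (hNMmono _ _ (Finset.subset_insert e P'))
      (hNMmono _ _ hPP')
      (fun i j => by rw [hdiff P heP i j, hdiff P' heP' i j]) k i j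
    linarith
  have hkey : ∀ i j, (1 - NM (insert e P))⁻¹ i j - (1 - NM P)⁻¹ i j ≤
      (1 - NM (insert e P'))⁻¹ i j - (1 - NM P')⁻¹ i j := by
    intro i j
    rw [hiN i j, hiK i j, hiN' i j, hiK' i j]
    calc (∑' k : ℕ, ((NM (insert e P)) ^ k) i j) - ∑' k : ℕ, ((NM P) ^ k) i j
        = ∑' k : ℕ, (((NM (insert e P)) ^ k) i j - ((NM P) ^ k) i j) :=
          (((hsK i j).hasSum.sub (hsN i j).hasSum).tsum_eq).symm
      _ ≤ ∑' k : ℕ, (((NM (insert e P')) ^ k) i j - ((NM P') ^ k) i j) :=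
          Summable.tsum_le_tsum (fun k => hterm k i j) ((hsK i j).sub (hsN i j))
            ((hsK' i j).sub (hsN' i j))
      _ = (∑' k : ℕ, ((NM (insert e P')) ^ k) i j) - ∑' k : ℕ, ((NM P') ^ k) i j :=
          ((hsK' i j).hasSum.sub (hsN' i j).hasSum).tsum_eq
  rw [hsigma (insert e P), hsigma P, hsigma (insert e P'), hsigma P',
    sub_sub_sub_cancel_right, sub_sub_sub_cancel_right, ← Finset.sum_sub_distrib,
    ← Finset.sum_sub_distrib]
  refine Finset.sum_le_sum fun i _ => ?_
  rw [← Finset.sum_sub_distrib, ← Finset.sum_sub_distrib]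
  refine Finset.sum_le_sum fun j _ => ?_
  have hco : 0 ≤ (g i)⁻¹ * δ i * v j :=
    mul_nonneg (mul_nonneg (inv_nonneg.mpr (hg0 i).le) (hδ i).1) (hv0 j)
  calc (g i)⁻¹ * δ i * ((1 - NM (insert e P))⁻¹ i j) * v j -
        (g i)⁻¹ * δ i * ((1 - NM P)⁻¹ i j) * v j
      = ((g i)⁻¹ * δ i * v j) *
          ((1 - NM (insert e P))⁻¹ i j - (1 - NM P)⁻¹ i j) := by ring
    _ ≤ ((g i)⁻¹ * δ i * v j) *
          ((1 - NM (insert e P'))⁻¹ i j - (1 - NM P')⁻¹ i j) :=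
        mul_le_mul_of_nonneg_left (hkey i j) hco
    _ = (g i)⁻¹ * δ i * ((1 - NM (insert e P'))⁻¹ i j) * v j -
        (g i)⁻¹ * δ i * ((1 - NM P')⁻¹ i j) * v j := by ring
end

section
/- Assume α_i ∈ (0,1] and ω_i + δ'_i > 0 for every i. Let P ⊆ {1,…,n}×{1,…,n} and suppose ρ(N_{−P}) < 1, where N_{−P} = I − D + A·S0·B_{−P}. Then for the SDIR dynamics run with B replaced by B_{−P}, the infection amount satisfies sup_{t≥0} ‖m(t) − m(0)‖₁ ≥ σ^L(P) = 1ᵀ·A^{−1}·(D·(I − N_{−P})^{−1} − I)·(x(0) + W·(W + D')^{−1}·y(0)). (Theorem 3: supermodular lower bound on the infection amount after deleting the edge set P.) -/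
open Matrix Filter Finset Topology
open scoped ENNReal NNReal

section Spec

attribute [local instance] Matrix.linftyOpNormedRing Matrix.linftyOpNormedAlgebra

lemma map_ofReal_pow {n : ℕ} (N : Matrix (Fin n) (Fin n) ℝ) (t : ℕ) :
    (N.map Complex.ofReal) ^ t = (N ^ t).map Complex.ofReal := by
  induction t with
  | zero =>
      rw [pow_zero, pow_zero, Matrix.map_one _ Complex.ofReal_zero Complex.ofReal_one]
  | succ t ih =>
      rw [pow_succ, pow_succ, ih,
        show ((N ^ t) * N).map Complex.ofReal =
          (N ^ t).map Complex.ofReal * N.map Complex.ofReal from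
            Matrix.map_mul (f := Complex.ofRealHom)]

lemma norm_map_ofReal {n : ℕ} (M : Matrix (Fin n) (Fin n) ℝ) :
    ‖M.map Complex.ofReal‖ = ‖M‖ := by
  rw [← coe_nnnorm, ← coe_nnnorm]
  congr 1
  rw [Matrix.linfty_opNNNorm_def, Matrix.linfty_opNNNorm_def]
  congr 1
  ext i
  congr 1
  ext j
  simp [Matrix.map_apply]

lemma exists_pow_norm_lt_one {n : ℕ} (hn : 1 ≤ n) (N : Matrix (Fin n) (Fin n) ℝ)
    (h : specRad N < 1) : ∃ k, 1 ≤ k ∧ ‖N ^ k‖ < 1 := by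
  haveI : Nonempty (Fin n) := Fin.pos_iff_nonempty.mp hn
  set Nc := N.map Complex.ofReal with hNcdef
  haveI : CompleteSpace (Matrix (Fin n) (Fin n) ℂ) := FiniteDimensional.complete ℂ _
  have hb : BddAbove {r : ℝ | ∃ μ : ℂ, μ ∈ spectrum ℂ Nc ∧ r = ‖μ‖} := by
    refine ⟨‖Nc‖, ?_⟩
    rintro r ⟨μ, hμ, rfl⟩
    exact spectrum.norm_le_norm_of_mem hμ
  have hsr : spectralRadius ℂ Nc ≤ ENNReal.ofReal (specRad N) := by
    rw [spectralRadius]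
    refine iSup₂_le fun μ hμ => ?_
    rw [← enorm_eq_nnnorm, ← ofReal_norm]
    refine ENNReal.ofReal_le_ofReal ?_
    exact le_csSup hb ⟨μ, hμ, rfl⟩
  have hlt : spectralRadius ℂ Nc < 1 :=
    lt_of_le_of_lt hsr (by exact_mod_cast ENNReal.ofReal_lt_one.mpr h)
  have hg := spectrum.pow_nnnorm_pow_one_div_tendsto_nhds_spectralRadius Nc
  have hev : ∀ᶠ k : ℕ in atTop, ((‖Nc ^ k‖₊ : ℝ≥0∞) ^ (1 / (k : ℝ))) < 1 :=
    hg.eventually_lt_const hlt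
  obtain ⟨k, hk, hk1⟩ := (hev.and (eventually_ge_atTop 1)).exists
  refine ⟨k, hk1, ?_⟩
  have hklt : (‖Nc ^ k‖₊ : ℝ≥0∞) < 1 := by
    by_contra hge
    push_neg at hge
    have : (1 : ℝ≥0∞) ≤ (‖Nc ^ k‖₊ : ℝ≥0∞) ^ (1 / (k : ℝ)) := by
      calc (1 : ℝ≥0∞) = 1 ^ (1 / (k : ℝ)) := (ENNReal.one_rpow _).symm
      _ ≤ _ := ENNReal.rpow_le_rpow hge (by positivity)
    exact absurd hk (not_lt.mpr this)
  have hlt' : ‖Nc ^ k‖ < 1 := by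
    rw [← coe_nnnorm]
    exact_mod_cast ENNReal.coe_lt_one_iff.mp hklt
  rwa [hNcdef, map_ofReal_pow, norm_map_ofReal] at hlt'

end Spec

section Spec2
attribute [local instance] Matrix.linftyOpNormedRing Matrix.linftyOpNormedAlgebra

lemma pow_norm_le_geom {n : ℕ} (hn : 1 ≤ n) (N : Matrix (Fin n) (Fin n) ℝ)
    (h : specRad N < 1) :
    ∃ C d : ℝ, 0 < C ∧ 0 ≤ d ∧ d < 1 ∧ ∀ t, ‖N ^ t‖ ≤ C * d ^ t := by
  haveI : Nonempty (Fin n) := Fin.pos_iff_nonempty.mp hn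
  obtain ⟨k, hk1, hk⟩ := exists_pow_norm_lt_one hn N h
  have hkpos : (0 : ℝ) < k := by exact_mod_cast hk1
  set c : ℝ := max ‖N ^ k‖ (1/2) with hc
  have hc0 : (0:ℝ) < c := lt_max_of_lt_right (by norm_num)
  have hc1 : c < 1 := max_lt hk (by norm_num)
  have hcN : ‖N ^ k‖ ≤ c := le_max_left _ _
  set d : ℝ := c ^ ((k : ℝ))⁻¹ with hd
  have hd0 : 0 < d := Real.rpow_pos_of_pos hc0 _
  have hd1 : d < 1 := Real.rpow_lt_one hc0.le hc1 (by positivity)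
  have hdk : d ^ k = c := by
    rw [hd, ← Real.rpow_natCast (c ^ ((k:ℝ))⁻¹) k, ← Real.rpow_mul hc0.le,
      inv_mul_cancel₀ (ne_of_gt hkpos), Real.rpow_one]
  set C0 : ℝ := (max 1 ‖N‖) ^ k with hC0def
  have hmax1 : (1:ℝ) ≤ max 1 ‖N‖ := le_max_left _ _
  have hC0one : (1:ℝ) ≤ C0 := one_le_pow₀ hmax1
  have hC0pos : (0:ℝ) < C0 := lt_of_lt_of_le one_pos hC0one
  have hNr : ∀ r : ℕ, r ≤ k → ‖N ^ r‖ ≤ C0 := by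
    intro r hr
    have h1 : ∀ r : ℕ, ‖N ^ r‖ ≤ (max 1 ‖N‖) ^ r := by
      intro r
      induction r with
      | zero => simp
      | succ r ih =>
          rw [pow_succ, pow_succ]
          exact le_trans (norm_mul_le _ _)
            (mul_le_mul ih (le_max_right _ _) (norm_nonneg _) (by positivity))
    exact le_trans (h1 r) (pow_le_pow_right₀ hmax1 hr)
  have hpowc : ∀ q : ℕ, ‖(N ^ k) ^ q‖ ≤ c ^ q := by
    intro q
    induction q with
    | zero => simp
    | succ q ih =>
        rw [pow_succ, pow_succ]
        exact le_trans (norm_mul_le _ _)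
          (mul_le_mul ih hcN (norm_nonneg _) (by positivity))
  refine ⟨C0 / c, d, div_pos hC0pos hc0, hd0.le, hd1, fun t => ?_⟩
  set q := t / k with hq
  set rr := t % k with hrr
  have ht : k * q + rr = t := Nat.div_add_mod t k
  have hrrk : rr < k := Nat.mod_lt _ (by omega)
  have hsplit : N ^ t = (N ^ k) ^ q * N ^ rr := by
    rw [← pow_mul, ← pow_add, ht]
  have h2 : ‖N ^ t‖ ≤ c ^ q * C0 := by
    rw [hsplit]
    exact le_trans (norm_mul_le _ _)
      (mul_le_mul (hpowc q) (hNr rr hrrk.le) (norm_nonneg _) (by positivity))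
  refine h2.trans ?_
  have hcq : c ^ (q + 1) ≤ d ^ t := by
    rw [← hdk, ← pow_mul]
    exact pow_le_pow_of_le_one hd0.le hd1.le (by rw [Nat.mul_succ]; omega)
  have heq : c ^ q * C0 = C0 / c * c ^ (q+1) := by
    field_simp
    ring
  rw [heq]
  exact mul_le_mul_of_nonneg_left hcq (le_of_lt (div_pos hC0pos hc0))

end Spec2

lemma entry_pow_nonneg {n : ℕ} {N : Matrix (Fin n) (Fin n) ℝ} (hN : ∀ i j, 0 ≤ N i j) :
    ∀ t i j, 0 ≤ (N ^ t) i j := by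
  intro t
  induction t with
  | zero =>
      intro i j
      by_cases h : i = j <;> simp [Matrix.one_apply, h]
  | succ t ih =>
      intro i j
      rw [pow_succ, Matrix.mul_apply]
      exact Finset.sum_nonneg fun k _ => mul_nonneg (ih i k) (hN k j)

section Spec3
attribute [local instance] Matrix.linftyOpNormedRing Matrix.linftyOpNormedAlgebra

lemma neumann {n : ℕ} (hn : 1 ≤ n) (N : Matrix (Fin n) (Fin n) ℝ)
    (h : specRad N < 1) (hN : ∀ i j, 0 ≤ N i j) :
    ∃ S : Matrix (Fin n) (Fin n) ℝ,
      (1 - N) * S = 1 ∧ S * (1 - N) = 1 ∧ 1 + N * S = S ∧ (∀ i j, 0 ≤ S i j) := by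
  haveI : Nonempty (Fin n) := Fin.pos_iff_nonempty.mp hn
  haveI : CompleteSpace (Matrix (Fin n) (Fin n) ℝ) := FiniteDimensional.complete ℝ _
  obtain ⟨C, d, hC, hd0, hd1, hbound⟩ := pow_norm_le_geom hn N h
  have hgeo : Summable (fun t : ℕ => C * d ^ t) :=
    (summable_geometric_of_lt_one hd0 hd1).mul_left C
  have hsum : Summable (fun t : ℕ => N ^ t) :=
    Summable.of_norm (Summable.of_nonneg_of_le (fun t => norm_nonneg _) hbound hgeo)
  have hsum' : Summable (fun t : ℕ => N ^ (t + 1)) := (summable_nat_add_iff 1).mpr hsum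
  set S := ∑' t : ℕ, N ^ t with hS
  have hNtend : Tendsto (fun T : ℕ => N ^ T) atTop (𝓝 0) := by
    refine squeeze_zero_norm hbound ?_
    have := (tendsto_pow_atTop_nhds_zero_of_lt_one hd0 hd1).const_mul C
    simpa using this
  have hNS : N * S = ∑' t : ℕ, N ^ (t + 1) := by
    rw [hS, ← Summable.tsum_mul_left N hsum]
    congr 1
    funext t
    rw [← pow_succ']
  have hSN : S * (1 - N) = ∑' t : ℕ, (N ^ t - N ^ (t + 1)) := by
    rw [hS, ← Summable.tsum_mul_right _ hsum]
    congr 1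
    funext t
    rw [mul_sub, mul_one, ← pow_succ]
  have htel : HasSum (fun t : ℕ => N ^ t - N ^ (t + 1)) 1 := by
    have hs2 : Summable fun t : ℕ => N ^ t - N ^ (t + 1) := hsum.sub hsum'
    rw [hs2.hasSum_iff_tendsto_nat]
    have : ∀ T : ℕ, ∑ t ∈ Finset.range T, (N ^ t - N ^ (t + 1)) = 1 - N ^ T := by
      intro T
      rw [Finset.sum_range_sub' (fun t => N ^ t)]
      simp
    simp only [this]
    simpa using tendsto_const_nhds.sub hNtend
  have h2 : S * (1 - N) = 1 := by
    rw [hSN, htel.tsum_eq]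
  have h3 : 1 + N * S = S := by
    rw [hNS]
    have := Summable.tsum_eq_zero_add hsum
    rw [hS]
    rw [this]
    simp
  have h1 : (1 - N) * S = 1 := by
    rw [sub_mul, one_mul]
    nth_rewrite 1 [← h3]
    exact add_sub_cancel_right 1 (N * S)
  refine ⟨S, h1, h2, h3, ?_⟩
  intro i j
  have hev : Continuous (fun M : Matrix (Fin n) (Fin n) ℝ => M i j) := by
    let ℓ : Matrix (Fin n) (Fin n) ℝ →ₗ[ℝ] ℝ :=
      { toFun := fun M => M i j
        map_add' := fun a b => rfl
        map_smul' := fun a b => rfl }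
    exact ℓ.continuous_of_finiteDimensional
  have hentry : HasSum (fun t : ℕ => (N ^ t) i j) (S i j) := by
    have := hsum.hasSum.map
      (AddMonoidHom.mk' (fun M : Matrix (Fin n) (Fin n) ℝ => M i j) (fun a b => rfl)) hev
    exact this
  exact hentry.nonneg fun t => entry_pow_nonneg hN t i j

end Spec3

/-- The lower-bound set function
`σᴸ(P) = 1ᵀ·A⁻¹·(D·(I − N₋ₚ)⁻¹ − I)·(x0 + W·(W + D')⁻¹·y0)`. -/
noncomputable def sigmaL {n : ℕ} (α ω δ δ' s x0 y0 : Fin n → ℝ)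
    (B : Matrix (Fin n) (Fin n) ℝ) (P : Finset (Fin n × Fin n)) : ℝ :=
  (fun _ => (1 : ℝ)) ⬝ᵥ
    ((Matrix.diagonal α)⁻¹ *
      (Matrix.diagonal δ *
        (1 - (1 - Matrix.diagonal δ +
          Matrix.diagonal α * Matrix.diagonal s * Bdel B P))⁻¹ - 1)) *ᵥ
      (x0 + (Matrix.diagonal ω * (Matrix.diagonal ω + Matrix.diagonal δ')⁻¹) *ᵥ y0)

lemma mulVec_nonneg' {n : ℕ} {M : Matrix (Fin n) (Fin n) ℝ} (hM : ∀ i j, 0 ≤ M i j)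
    {w : Fin n → ℝ} (hw : ∀ i, 0 ≤ w i) : ∀ i, 0 ≤ (M *ᵥ w) i := by
  intro i
  rw [Matrix.mulVec, dotProduct]
  exact Finset.sum_nonneg fun j _ => mul_nonneg (hM i j) (hw j)

lemma mulVec_mono' {n : ℕ} {M : Matrix (Fin n) (Fin n) ℝ} (hM : ∀ i j, 0 ≤ M i j)
    {u w : Fin n → ℝ} (h : ∀ i, u i ≤ w i) : ∀ i, (M *ᵥ u) i ≤ (M *ᵥ w) i := by
  intro i
  rw [Matrix.mulVec, Matrix.mulVec, dotProduct, dotProduct]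
  exact Finset.sum_le_sum fun j _ => mul_le_mul_of_nonneg_left (h j) (hM i j)

noncomputable def xiSeq {n : ℕ} (N W : Matrix (Fin n) (Fin n) ℝ) (g : ℕ → Fin n → ℝ)
    (x0 : Fin n → ℝ) : ℕ → Fin n → ℝ
  | 0 => x0
  | t + 1 => N *ᵥ xiSeq N W g x0 t + W *ᵥ g t

lemma mulVec_apply' {n : ℕ} (M : Matrix (Fin n) (Fin n) ℝ) (w : Fin n → ℝ) (i : Fin n) :
    (M *ᵥ w) i = ∑ j, M i j * w j := by
  rw [Matrix.mulVec, dotProduct]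

/-- Theorem 3: supermodular lower bound on the infection amount after deleting
the edge set `P`:  `sup_t ‖m(t) − m(0)‖₁ ≥ σᴸ(P)`, stated in the equivalent
`ε`-form for the (possibly infinite) supremum. -/
theorem sdir_lower_bound
    (n : ℕ) (hn : 1 ≤ n) (α ω δ δ' s : Fin n → ℝ)
    (hα : ∀ i, 0 < α i ∧ α i ≤ 1) (hω : ∀ i, 0 ≤ ω i ∧ ω i ≤ 1)
    (hδ : ∀ i, 0 ≤ δ i ∧ δ i ≤ 1) (hδ' : ∀ i, 0 ≤ δ' i ∧ δ' i ≤ 1)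
    (hs : ∀ i, 0 ≤ s i ∧ s i ≤ 1) (hωδ' : ∀ i, ω i + δ' i ≤ 1)
    (hωδ'pos : ∀ i, 0 < ω i + δ' i)
    (B : Matrix (Fin n) (Fin n) ℝ) (hB : ∀ i j, 0 ≤ B i j)
    (P : Finset (Fin n × Fin n))
    (hρ : specRad
      (1 - Matrix.diagonal δ + Matrix.diagonal α * Matrix.diagonal s * Bdel B P) < 1)
    (x y r : ℕ → Fin n → ℝ)
    (hx : ∀ t i, 0 ≤ x t i) (hy : ∀ t i, 0 ≤ y t i) (hr : ∀ t i, 0 ≤ r t i)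
    (hdynx : ∀ t, x (t + 1) =
      (1 - Matrix.diagonal δ + Matrix.diagonal α * Matrix.diagonal s * Bdel B P) *ᵥ x t +
        Matrix.diagonal ω *ᵥ y t)
    (hdyny : ∀ t, y (t + 1) =
      ((1 - Matrix.diagonal α) * Matrix.diagonal s * Bdel B P) *ᵥ x t +
        (1 - Matrix.diagonal ω - Matrix.diagonal δ') *ᵥ y t)
    (hdynr : ∀ t, r (t + 1) =
      Matrix.diagonal δ *ᵥ x t + Matrix.diagonal δ' *ᵥ y t + r t)
    (m : ℕ → Fin n → ℝ) (hm : ∀ t, m t = x t + y t + r t) :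
    ∀ ε : ℝ, 0 < ε → ∃ t,
      sigmaL α ω δ δ' s (x 0) (y 0) B P - ε < ∑ i, |m t i - m 0 i| := by
  intro ε hε
  set Bp := Bdel B P with hBpdef
  set A := Matrix.diagonal α with hAdef
  set S0 := Matrix.diagonal s with hS0def
  set D := Matrix.diagonal δ with hDdef
  set D' := Matrix.diagonal δ' with hD'def
  set W := Matrix.diagonal ω with hWdef
  set N := 1 - D + A * S0 * Bp with hNdef
  -- basic entry facts
  have hBp : ∀ i j, 0 ≤ Bp i j := by
    intro i j
    rw [hBpdef]
    show (0:ℝ) ≤ if (i, j) ∈ P then 0 else B i j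
    split
    · exact le_refl 0
    · exact hB i j
  have hNapp : ∀ i j, N i j = (if i = j then 1 - δ i else 0) + α i * s i * Bp i j := by
    intro i j
    rw [hNdef, Matrix.add_apply, Matrix.sub_apply, hAdef, hS0def,
      Matrix.diagonal_mul_diagonal, Matrix.diagonal_mul, hDdef,
      Matrix.one_apply, Matrix.diagonal_apply]
    split_ifs <;> ring
  have hNnn : ∀ i j, 0 ≤ N i j := by
    intro i j
    rw [hNapp]
    have h1 : (0:ℝ) ≤ if i = j then 1 - δ i else 0 := by
      split
      · linarith [(hδ i).2]
      · exact le_refl 0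
    have h2 : (0:ℝ) ≤ α i * s i * Bp i j :=
      mul_nonneg (mul_nonneg (hα i).1.le (hs i).1) (hBp i j)
    linarith
  obtain ⟨S, hS1, hS2, hS3, hSnn⟩ := neumann hn N hρ hNnn
  have hNinv : (1 - N)⁻¹ = S := Matrix.inv_eq_right_inv hS1
  -- the vector v and u
  set μ : Fin n → ℝ := fun i => 1 - ω i - δ' i with hμdef
  have hμ0 : ∀ i, 0 ≤ μ i := fun i => by have := hωδ' i; simp [hμdef]; linarith
  have hμ1 : ∀ i, μ i < 1 := fun i => by have := hωδ'pos i; simp [hμdef]; linarith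
  set v : Fin n → ℝ := fun i => ω i * ((ω i + δ' i)⁻¹ * y 0 i) with hvdef
  set u : Fin n → ℝ := fun i => x 0 i + v i with hudef
  have hv0 : ∀ i, 0 ≤ v i := fun i =>
    mul_nonneg (hω i).1 (mul_nonneg (inv_nonneg.mpr (hωδ'pos i).le) (hy 0 i))
  have hu0 : ∀ i, 0 ≤ u i := fun i => add_nonneg (hx 0 i) (hv0 i)
  -- σᴸ rewriting
  have hAdet : IsUnit A.det := by
    rw [hAdef, Matrix.det_diagonal]
    exact (Finset.prod_pos fun i _ => (hα i).1).ne'.isUnit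
  have hAinvA : A⁻¹ * A = 1 := Matrix.nonsing_inv_mul A hAdet
  have hWD'inv : (W + D')⁻¹ = Matrix.diagonal (fun i => (ω i + δ' i)⁻¹) := by
    apply Matrix.inv_eq_right_inv
    rw [hWdef, hD'def, Matrix.diagonal_add, Matrix.diagonal_mul_diagonal]
    ext a b
    by_cases hab : a = b
    · subst hab
      simp [Matrix.diagonal_apply, Matrix.one_apply, mul_inv_cancel₀ (hωδ'pos a).ne']
    · simp [Matrix.diagonal_apply, Matrix.one_apply, hab]
  have hK : (W * (W + D')⁻¹) *ᵥ y 0 = v := by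
    rw [hWD'inv, hWdef, Matrix.diagonal_mul_diagonal]
    funext i
    rw [Matrix.mulVec_diagonal, hvdef]
    ring
  have hDS : D * S - 1 = A * S0 * Bp * S := by
    calc D * S - 1 = D * S - (1 - N) * S := by rw [hS1]
      _ = (D - (1 - N)) * S := (sub_mul _ _ _).symm
      _ = (A * S0 * Bp) * S := by
          congr 1
          rw [hNdef]
          abel
  have hmain : A⁻¹ * (D * S - 1) = S0 * Bp * S := by
    rw [hDS]
    calc A⁻¹ * (A * S0 * Bp * S) = (A⁻¹ * A) * (S0 * (Bp * S)) := by
          simp only [mul_assoc]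
      _ = S0 * Bp * S := by rw [hAinvA, one_mul, mul_assoc]
  have hsigma : sigmaL α ω δ δ' s (x 0) (y 0) B P =
      ∑ i, ((S0 * Bp) *ᵥ (S *ᵥ u)) i := by
    rw [sigmaL, ← hBpdef, ← hAdef, ← hS0def, ← hDdef, ← hD'def, ← hWdef, ← hNdef,
      hNinv, hmain, hK]
    have hxu : x 0 + v = u := rfl
    rw [hxu, ← Matrix.mulVec_mulVec]
    simp [dotProduct]
  have hOneA : (1 : Matrix (Fin n) (Fin n) ℝ) - A = Matrix.diagonal (fun i => 1 - α i) := by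
    ext a b
    by_cases hab : a = b <;>
      simp [hAdef, hab, Matrix.one_apply, Matrix.sub_apply, Matrix.diagonal_apply]
  have hμM : (1 : Matrix (Fin n) (Fin n) ℝ) - W - D' = Matrix.diagonal μ := by
    ext a b
    by_cases hab : a = b <;>
      simp [hWdef, hD'def, hμdef, hab, Matrix.one_apply, Matrix.sub_apply,
        Matrix.diagonal_apply]
  -- dynamics lower bounds
  set g : ℕ → Fin n → ℝ := fun t i => μ i ^ t * y 0 i with hgdef
  set ξ : ℕ → Fin n → ℝ := xiSeq N W g (x 0) with hξdef
  have hg0 : ∀ t i, 0 ≤ g t i := fun t i =>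
    mul_nonneg (pow_nonneg (hμ0 i) t) (hy 0 i)
  have hylow : ∀ t i, g t i ≤ y t i := by
    intro t
    induction t with
    | zero => intro i; simp [hgdef]
    | succ t ih =>
        intro i
        rw [hdyny t]
        have hterm1 : 0 ≤ (((1 - A) * S0 * Bp) *ᵥ x t) i := by
          refine mulVec_nonneg' ?_ (hx t) i
          intro i j
          rw [show (1 - A) * S0 * Bp = Matrix.diagonal (fun i => (1 - α i) * s i) * Bp by
            rw [hOneA, hS0def, Matrix.diagonal_mul_diagonal]]
          rw [Matrix.diagonal_mul]
          exact mul_nonneg (mul_nonneg (by linarith [(hα i).2]) (hs i).1) (hBp i j)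
        have hterm2 : ((1 - W - D') *ᵥ y t) i = μ i * y t i := by
          rw [hμM]
          exact Matrix.mulVec_diagonal _ _ _
        have : μ i * g t i ≤ μ i * y t i :=
          mul_le_mul_of_nonneg_left (ih i) (hμ0 i)
        have hgs : g (t+1) i = μ i * g t i := by simp [hgdef, pow_succ]; ring
        rw [hgs]
        calc μ i * g t i ≤ μ i * y t i := this
          _ ≤ (((1 - A) * S0 * Bp) *ᵥ x t) i + ((1 - W - D') *ᵥ y t) i := by
              rw [hterm2]; linarith
          _ = _ := rfl
  have hξle : ∀ t i, ξ t i ≤ x t i := by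
    intro t
    induction t with
    | zero => intro i; simp [hξdef, xiSeq]
    | succ t ih =>
        intro i
        rw [hdynx t]
        have h1 : (N *ᵥ ξ t) i ≤ (N *ᵥ x t) i := mulVec_mono' hNnn ih i
        have h2 : (W *ᵥ g t) i ≤ (W *ᵥ y t) i := by
          rw [hWdef, Matrix.mulVec_diagonal, Matrix.mulVec_diagonal]
          exact mul_le_mul_of_nonneg_left (hylow t i) (hω i).1
        have : ξ (t+1) i = (N *ᵥ ξ t) i + (W *ᵥ g t) i := rfl
        rw [this]
        exact add_le_add h1 h2
  have hξnn : ∀ t i, 0 ≤ ξ t i := by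
    intro t
    induction t with
    | zero => intro i; simpa [hξdef, xiSeq] using hx 0 i
    | succ t ih =>
        intro i
        have : ξ (t+1) i = (N *ᵥ ξ t) i + (W *ᵥ g t) i := rfl
        rw [this]
        refine add_nonneg (mulVec_nonneg' hNnn ih i) ?_
        refine mulVec_nonneg' ?_ (hg0 t) i
        intro i j
        rw [hWdef, Matrix.diagonal_apply]
        split
        · exact (hω i).1
        · exact le_refl 0
  -- partial sums
  set X : ℕ → Fin n → ℝ := fun T i => ∑ t ∈ Finset.range T, ξ t i with hXdef
  have hξsucc : ∀ t, ξ (t + 1) = N *ᵥ ξ t + W *ᵥ g t := fun t => rfl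
  have hXrec : ∀ T i, X (T + 1) i =
      x 0 i + (N *ᵥ X T) i + ω i * ((∑ t ∈ Finset.range T, μ i ^ t) * y 0 i) := by
    intro T i
    have e1 : X (T + 1) i = (∑ t ∈ Finset.range T, ξ (t + 1) i) + ξ 0 i :=
      Finset.sum_range_succ' (fun t => ξ t i) T
    have e2 : ∀ t, ξ (t + 1) i = (N *ᵥ ξ t) i + ω i * (μ i ^ t * y 0 i) := by
      intro t
      rw [hξsucc t]
      show (N *ᵥ ξ t) i + (W *ᵥ g t) i = _
      rw [hWdef, Matrix.mulVec_diagonal]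
    have e3 : ∑ t ∈ Finset.range T, ξ (t + 1) i =
        (∑ t ∈ Finset.range T, (N *ᵥ ξ t) i) +
          ∑ t ∈ Finset.range T, ω i * (μ i ^ t * y 0 i) := by
      rw [← Finset.sum_add_distrib]
      exact Finset.sum_congr rfl fun t _ => e2 t
    have e4 : ∑ t ∈ Finset.range T, (N *ᵥ ξ t) i = (N *ᵥ X T) i := by
      calc ∑ t ∈ Finset.range T, (N *ᵥ ξ t) i
          = ∑ t ∈ Finset.range T, ∑ j, N i j * ξ t j :=
            Finset.sum_congr rfl fun t _ => mulVec_apply' _ _ _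
        _ = ∑ j, ∑ t ∈ Finset.range T, N i j * ξ t j := Finset.sum_comm
        _ = ∑ j, N i j * ∑ t ∈ Finset.range T, ξ t j :=
            Finset.sum_congr rfl fun j _ => (Finset.mul_sum _ _ _).symm
        _ = (N *ᵥ X T) i := (mulVec_apply' _ _ _).symm
    have e5 : ∑ t ∈ Finset.range T, ω i * (μ i ^ t * y 0 i) =
        ω i * ((∑ t ∈ Finset.range T, μ i ^ t) * y 0 i) := by
      rw [Finset.sum_mul, Finset.mul_sum]
    have e0 : ξ 0 i = x 0 i := rfl
    rw [e1, e3, e4, e5, e0]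
    ring
  have hgeoHS : ∀ i, HasSum (fun t : ℕ => μ i ^ t) (ω i + δ' i)⁻¹ := by
    intro i
    have h := hasSum_geometric_of_lt_one (hμ0 i) (hμ1 i)
    have h2 : 1 - μ i = ω i + δ' i := by rw [hμdef]; ring
    rwa [h2] at h
  have hgeole : ∀ i T, ∑ t ∈ Finset.range T, μ i ^ t ≤ (ω i + δ' i)⁻¹ := fun i T =>
    sum_le_hasSum (Finset.range T) (fun t _ => pow_nonneg (hμ0 i) t) (hgeoHS i)
  set Ls : Fin n → ℝ := S *ᵥ u with hLsdef
  have hXb : ∀ T i, X T i ≤ Ls i := by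
    intro T
    induction T with
    | zero =>
        intro i
        have : X 0 i = 0 := by simp [hXdef]
        rw [this, hLsdef]
        exact mulVec_nonneg' hSnn hu0 i
    | succ T ih =>
        intro i
        rw [hXrec T i]
        have h1 : (N *ᵥ X T) i ≤ (N *ᵥ Ls) i := mulVec_mono' hNnn ih i
        have h2 : ω i * ((∑ t ∈ Finset.range T, μ i ^ t) * y 0 i) ≤ v i := by
          rw [hvdef]
          exact mul_le_mul_of_nonneg_left
            (mul_le_mul_of_nonneg_right (hgeole i T) (hy 0 i)) (hω i).1
        have h3 : x 0 i + (N *ᵥ Ls) i + v i = Ls i := by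
          have hns : N *ᵥ Ls = (N * S) *ᵥ u := by rw [hLsdef, Matrix.mulVec_mulVec]
          have h4 : Ls i = ((1 + N * S) *ᵥ u) i := by rw [hLsdef, hS3]
          rw [hns, h4, Matrix.add_mulVec, Matrix.one_mulVec]
          show x 0 i + ((N * S) *ᵥ u) i + v i = u i + ((N * S) *ᵥ u) i
          rw [hudef]
          ring
        linarith
  have hXmono : ∀ i, Monotone fun T => X T i := fun i =>
    monotone_nat_of_le_succ fun T => by
      have : X (T + 1) i = X T i + ξ T i := Finset.sum_range_succ (fun t => ξ t i) T
      rw [this]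
      linarith [hξnn T i]
  set Lv : Fin n → ℝ := fun i => ⨆ T, X T i with hLvdef
  have hXtend : ∀ i, Tendsto (fun T => X T i) atTop (𝓝 (Lv i)) := fun i =>
    tendsto_atTop_ciSup (hXmono i) ⟨Ls i, by rintro _ ⟨T, rfl⟩; exact hXb T i⟩
  have hfix : ∀ i, Lv i = x 0 i + (N *ᵥ Lv) i + v i := by
    intro i
    have hl : Tendsto (fun T => X (T + 1) i) atTop (𝓝 (Lv i)) :=
      (hXtend i).comp (tendsto_add_atTop_nat 1)
    have hrhs : Tendsto
        (fun T => x 0 i + (N *ᵥ X T) i +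
          ω i * ((∑ t ∈ Finset.range T, μ i ^ t) * y 0 i))
        atTop (𝓝 (x 0 i + (N *ᵥ Lv) i + v i)) := by
      refine Tendsto.add (Tendsto.add tendsto_const_nhds ?_) ?_
      · have hT : ∀ T, (N *ᵥ X T) i = ∑ j, N i j * X T j := fun T => mulVec_apply' _ _ _
        rw [show (N *ᵥ Lv) i = ∑ j, N i j * Lv j from mulVec_apply' _ _ _]
        simp only [hT]
        exact tendsto_finset_sum _ fun j _ => (hXtend j).const_mul (N i j)
      · rw [hvdef]
        exact (((hgeoHS i).tendsto_sum_nat).mul_const (y 0 i)).const_mul (ω i)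
    exact tendsto_nhds_unique hl (hrhs.congr fun T => (hXrec T i).symm)
  have hLveq : Lv = S *ᵥ u := by
    have h1 : (1 - N) *ᵥ Lv = u := by
      funext i
      rw [Matrix.sub_mulVec, Matrix.one_mulVec]
      show Lv i - (N *ᵥ Lv) i = u i
      have := hfix i
      rw [hudef]
      show Lv i - (N *ᵥ Lv) i = x 0 i + v i
      linarith
    calc Lv = 1 *ᵥ Lv := (Matrix.one_mulVec _).symm
      _ = (S * (1 - N)) *ᵥ Lv := by rw [hS2]
      _ = S *ᵥ ((1 - N) *ᵥ Lv) := (Matrix.mulVec_mulVec _ _ _).symm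
      _ = S *ᵥ u := by rw [h1]
  -- telescoping of m
  have hmstep : ∀ t, m (t + 1) = m t + (S0 * Bp) *ᵥ x t := by
    intro t
    have hexp : (1 - A) * S0 * Bp = S0 * Bp - A * S0 * Bp := by noncomm_ring
    rw [hm (t + 1), hm t, hdynx t, hdyny t, hdynr t, hNdef, hexp]
    simp only [Matrix.add_mulVec, Matrix.sub_mulVec, Matrix.one_mulVec]
    abel
  have hSBnn : ∀ i j, 0 ≤ (S0 * Bp) i j := by
    intro i j
    rw [hS0def, Matrix.diagonal_mul]
    exact mul_nonneg (hs i).1 (hBp i j)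
  have htel2 : ∀ T i, m T i - m 0 i = ∑ t ∈ Finset.range T, ((S0 * Bp) *ᵥ x t) i := by
    intro T
    induction T with
    | zero => intro i; simp
    | succ T ih =>
        intro i
        rw [hmstep T]
        show (m T + (S0 * Bp) *ᵥ x T) i - m 0 i = _
        rw [Pi.add_apply, Finset.sum_range_succ]
        have := ih i
        linarith
  -- final limit argument
  have hFt : Tendsto (fun T => ∑ i, ((S0 * Bp) *ᵥ X T) i) atTop
      (𝓝 (∑ i, ((S0 * Bp) *ᵥ Lv) i)) := by
    refine tendsto_finset_sum _ fun i _ => ?_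
    simp only [mulVec_apply']
    exact tendsto_finset_sum _ fun j _ => (hXtend j).const_mul ((S0 * Bp) i j)
  have hσ' : sigmaL α ω δ δ' s (x 0) (y 0) B P = ∑ i, ((S0 * Bp) *ᵥ Lv) i := by
    rw [hsigma, hLveq]
  have hev2 : ∀ᶠ T in atTop,
      sigmaL α ω δ δ' s (x 0) (y 0) B P - ε < ∑ i, ((S0 * Bp) *ᵥ X T) i := by
    refine hFt.eventually (eventually_gt_nhds ?_)
    rw [hσ']
    exact sub_lt_self _ hε
  obtain ⟨T, hT⟩ := hev2.exists
  refine ⟨T, ?_⟩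
  calc sigmaL α ω δ δ' s (x 0) (y 0) B P - ε < ∑ i, ((S0 * Bp) *ᵥ X T) i := hT
    _ = ∑ i, ∑ t ∈ Finset.range T, ((S0 * Bp) *ᵥ ξ t) i := by
        refine Finset.sum_congr rfl fun i _ => ?_
        rw [mulVec_apply']
        calc ∑ j, (S0 * Bp) i j * X T j
            = ∑ j, ∑ t ∈ Finset.range T, (S0 * Bp) i j * ξ t j :=
              Finset.sum_congr rfl fun j _ => Finset.mul_sum _ _ _
          _ = ∑ t ∈ Finset.range T, ∑ j, (S0 * Bp) i j * ξ t j := Finset.sum_comm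
          _ = ∑ t ∈ Finset.range T, ((S0 * Bp) *ᵥ ξ t) i :=
              Finset.sum_congr rfl fun t _ => (mulVec_apply' _ _ _).symm
    _ ≤ ∑ i, ∑ t ∈ Finset.range T, ((S0 * Bp) *ᵥ x t) i :=
        Finset.sum_le_sum fun i _ =>
          Finset.sum_le_sum fun t _ => mulVec_mono' hSBnn (hξle t) i
    _ = ∑ i, (m T i - m 0 i) :=
        Finset.sum_congr rfl fun i _ => (htel2 T i).symm
    _ ≤ ∑ i, |m T i - m 0 i| :=
        Finset.sum_le_sum fun i _ => le_abs_self _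
end
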